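/- For natural numbers n, k with 1 ≤ k < n, the trace of the k-th exterior power of the linear automorphism of ℂ^n given by the cyclic permutation (1,2,...,n) of the standard basis vectors is zero. -/

import Mathlib

open ExteriorAlgebra

/-- The endomorphism of the `k`-th exterior power `⋀[R]^k M` induced by an
endomorphism `f` of `M`. -/
noncomputable def extPowerMap {R : Type*} [CommRing R] {M : Type*} [AddCommGroup M]
    [Module R M] (k : ℕ) (f : M →ₗ[R] M) : ⋀[R]^k M →ₗ[R] ⋀[R]^k M :=
  LinearMap.restrict (ExteriorAlgebra.map f).toLinearMap (fun x hx => by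
    have h2 : Submodule.map (ExteriorAlgebra.map f).toLinearMap
        (LinearMap.range (ι R (M := M))) ≤ LinearMap.range (ι R (M := M)) := by
      rintro y ⟨z, ⟨m, rfl⟩, rfl⟩
      exact ⟨f m, (map_apply_ι f m).symm⟩
    have h3 : Submodule.map (ExteriorAlgebra.map f).toLinearMap (⋀[R]^k M) ≤ ⋀[R]^k M := by
      rw [exteriorPower, Submodule.map_pow]
      gcongr
    exact h3 (Submodule.mem_map_of_mem hx))

lemma extPowerMap_apply_coe {R : Type*} [CommRing R] {M : Type*} [AddCommGroup M]
    [Module R M] (k : ℕ) (f : M →ₗ[R] M) (x : ⋀[R]^k M) :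
    (extPowerMap k f x : ExteriorAlgebra R M) = ExteriorAlgebra.map f x := rfl

lemma extPowerMap_comp {R : Type*} [CommRing R] {M : Type*} [AddCommGroup M]
    [Module R M] (k : ℕ) (f g : M →ₗ[R] M) :
    extPowerMap k (f ∘ₗ g) = (extPowerMap k f) ∘ₗ (extPowerMap k g) := by
  refine LinearMap.ext fun x => Subtype.ext ?_
  show ((extPowerMap k (f ∘ₗ g)) x : ExteriorAlgebra R M)
      = ((extPowerMap k f) ((extPowerMap k g) x) : ExteriorAlgebra R M)
  rw [extPowerMap_apply_coe, extPowerMap_apply_coe, extPowerMap_apply_coe,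
    ← ExteriorAlgebra.map_comp_map]
  rfl

lemma extPowerMap_id {R : Type*} [CommRing R] {M : Type*} [AddCommGroup M]
    [Module R M] (k : ℕ) :
    extPowerMap k (LinearMap.id (R := R) (M := M)) = LinearMap.id := by
  refine LinearMap.ext fun x => Subtype.ext ?_
  show ((extPowerMap k LinearMap.id) x : ExteriorAlgebra R M) = (x : ExteriorAlgebra R M)
  rw [extPowerMap_apply_coe, ExteriorAlgebra.map_id]
  rfl

lemma extPowerMap_smul {R : Type*} [CommRing R] {M : Type*} [AddCommGroup M]
    [Module R M] (k : ℕ) (c : R) (f : M →ₗ[R] M) :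
    extPowerMap k (c • f) = c ^ k • extPowerMap k f := by
  refine LinearMap.ext fun x => Subtype.ext ?_
  show ((extPowerMap k (c • f)) x : ExteriorAlgebra R M)
      = ((c ^ k • extPowerMap k f) x : ExteriorAlgebra R M)
  have key : ∀ y ∈ Submodule.span R (Set.range (ιMulti R k (M := M))),
      ExteriorAlgebra.map (c • f) y = c ^ k • ExteriorAlgebra.map f y := by
    intro y hy
    induction hy using Submodule.span_induction with
    | mem y hy =>
      obtain ⟨v, rfl⟩ := hy
      rw [map_apply_ιMulti, map_apply_ιMulti]
      have h1 : (c • f) ∘ v = fun i => c • (f ∘ v) i := by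
        funext i; simp
      rw [h1]
      have h2 := MultilinearMap.map_smul_univ
        (ιMulti R k (M := M)).toMultilinearMap (fun _ => c) (f ∘ v)
      simpa [Finset.prod_const] using h2
    | zero => simp
    | add y z _ _ hy hz => rw [map_add, map_add, hy, hz, smul_add]
    | smul a y _ hy => rw [map_smul, map_smul, hy, smul_comm]
  have hx : (x : ExteriorAlgebra R M) ∈ Submodule.span R (Set.range (ιMulti R k (M := M))) := by
    rw [ιMulti_span_fixedDegree]; exact x.2
  rw [extPowerMap_apply_coe]
  have h2 : ((c ^ k • extPowerMap k f) x : ExteriorAlgebra R M)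
      = c ^ k • (ExteriorAlgebra.map f (x : ExteriorAlgebra R M)) := rfl
  rw [h2]
  exact key _ hx

/-- For `1 ≤ k < n`, the trace of the `k`-th exterior power of the linear automorphism
of `ℂ^n` given by the cyclic permutation `(1,2,...,n)` of the standard basis vectors is
zero; i.e. the character of `Λ^k φ_n` vanishes on the cycle `(1,2,...,n)`. -/
theorem trace_exteriorPower_cyclic (n k : ℕ) (hk1 : 1 ≤ k) (hkn : k < n)
    (f : (Fin n → ℂ) →ₗ[ℂ] (Fin n → ℂ))
    (hf : ∀ j : Fin n, f (Pi.single j 1) = Pi.single (finRotate n j) 1) :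
    LinearMap.trace ℂ (⋀[ℂ]^k (Fin n → ℂ)) (extPowerMap k f) = 0 := by
  have hn : (n : ℕ) ≠ 0 := by omega
  set ζ : ℂ := Complex.exp (2 * Real.pi * Complex.I / n) with hζdef
  have hprim : IsPrimitiveRoot ζ n := Complex.isPrimitiveRoot_exp n hn
  have hζn : ζ ^ n = 1 := hprim.pow_eq_one
  have hζ0 : ζ ≠ 0 := hprim.ne_zero hn
  have hpow : ∀ a : ℕ, ζ ^ (a % n) = ζ ^ a := by
    intro a
    conv_rhs => rw [← Nat.div_add_mod a n]
    rw [pow_add, pow_mul, hζn, one_pow, one_mul]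
  set D : (Fin n → ℂ) →ₗ[ℂ] (Fin n → ℂ) :=
    LinearMap.pi (fun j => ζ ^ (j : ℕ) • LinearMap.proj j) with hD
  set D' : (Fin n → ℂ) →ₗ[ℂ] (Fin n → ℂ) :=
    LinearMap.pi (fun j => (ζ⁻¹) ^ (j : ℕ) • LinearMap.proj j) with hD'
  have hDapp : ∀ (v : Fin n → ℂ) (i : Fin n), D v i = ζ ^ (i : ℕ) * v i := fun v i => rfl
  have hD'app : ∀ (v : Fin n → ℂ) (i : Fin n), D' v i = (ζ⁻¹) ^ (i : ℕ) * v i := fun v i => rfl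
  have hDD' : D ∘ₗ D' = LinearMap.id := by
    ext v i
    simp only [LinearMap.comp_apply, LinearMap.id_apply, hDapp, hD'app]
    field_simp
    rw [one_div, ← mul_pow, mul_inv_cancel₀ hζ0, one_pow, one_mul]
  have hD'D : D' ∘ₗ D = LinearMap.id := by
    ext v i
    simp only [LinearMap.comp_apply, LinearMap.id_apply, hDapp, hD'app]
    field_simp
    rw [one_div, ← mul_pow, inv_mul_cancel₀ hζ0, one_pow, one_mul]
  have hDsingle : ∀ m : Fin n,
      D (Pi.single m (1:ℂ)) = (ζ ^ (m : ℕ)) • (Pi.single m 1 : Fin n → ℂ) := by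
    intro m
    funext i
    rcases eq_or_ne i m with rfl | h
    · simp [hDapp]
    · simp [hDapp, Pi.single_apply, h]
  have hcomm : D ∘ₗ f = ζ • (f ∘ₗ D) := by
    apply Module.Basis.ext (Pi.basisFun ℂ (Fin n))
    intro j
    have hb : (Pi.basisFun ℂ (Fin n)) j = Pi.single j 1 := by
      simp [Pi.basisFun_apply]
    rw [hb]
    have h2 : ((finRotate n j : Fin n) : ℕ) = ((j : ℕ) + 1) % n := by
      obtain ⟨m, rfl⟩ : ∃ m, n = m + 1 := ⟨n - 1, by omega⟩
      rw [finRotate_succ_apply, Fin.add_def]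
      have h1lt : (1 : ℕ) < m + 1 := by omega
      simp [Nat.mod_eq_of_lt h1lt]
    calc (D ∘ₗ f) (Pi.single j 1)
        = D (Pi.single (finRotate n j) 1) := by rw [LinearMap.comp_apply, hf j]
      _ = (ζ ^ ((finRotate n j : Fin n) : ℕ)) •
            (Pi.single (finRotate n j) 1 : Fin n → ℂ) := hDsingle _
      _ = (ζ ^ ((j : ℕ) + 1)) • (Pi.single (finRotate n j) 1 : Fin n → ℂ) := by
            rw [h2, hpow]
      _ = (ζ • (f ∘ₗ D)) (Pi.single j 1) := by
            rw [LinearMap.smul_apply, LinearMap.comp_apply, hDsingle j, map_smul, hf j,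
              smul_smul, pow_succ, mul_comm]
  have hconj : ζ • f = D ∘ₗ f ∘ₗ D' := by
    calc ζ • f = ζ • (f ∘ₗ (D ∘ₗ D')) := by rw [hDD', LinearMap.comp_id]
      _ = (ζ • (f ∘ₗ D)) ∘ₗ D' := by
          rw [LinearMap.smul_comp, LinearMap.comp_assoc]
      _ = (D ∘ₗ f) ∘ₗ D' := by rw [hcomm]
      _ = D ∘ₗ f ∘ₗ D' := by rw [LinearMap.comp_assoc]
  set T := LinearMap.trace ℂ (⋀[ℂ]^k (Fin n → ℂ)) with hT
  have e1 : T (extPowerMap k (ζ • f)) = ζ ^ k * T (extPowerMap k f) := by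
    rw [extPowerMap_smul, map_smul, smul_eq_mul]
  have e2 : T (extPowerMap k (ζ • f)) = T (extPowerMap k f) := by
    rw [hconj, extPowerMap_comp, extPowerMap_comp]
    rw [show extPowerMap k D ∘ₗ (extPowerMap k f ∘ₗ extPowerMap k D')
        = (extPowerMap k D) * ((extPowerMap k f) * (extPowerMap k D')) from rfl]
    rw [LinearMap.trace_mul_comm, mul_assoc,
      show (extPowerMap k D') * (extPowerMap k D) = extPowerMap k (D' ∘ₗ D) from
        (extPowerMap_comp k D' D).symm, hD'D, extPowerMap_id,
      show (LinearMap.id : ⋀[ℂ]^k (Fin n → ℂ) →ₗ[ℂ] ⋀[ℂ]^k (Fin n → ℂ)) = 1 from rfl, mul_one]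
  have h : ζ ^ k * T (extPowerMap k f) = T (extPowerMap k f) := e1.symm.trans e2
  have hne : ζ ^ k ≠ 1 := hprim.pow_ne_one_of_pos_of_lt (by omega) hkn
  have h0 : (ζ ^ k - 1) * T (extPowerMap k f) = 0 := by ring_nf; linear_combination h
  rcases mul_eq_zero.mp h0 with h' | h'
  · exact absurd (sub_eq_zero.mp h') hne
  · exact h'
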